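/- Let (𝒳, Σ) be a measurable space, μ a probability measure on 𝒳, κ a Markov kernel from 𝒳 to ℝ (Borel σ-algebra), π = μ ⊗ₘ κ the composition-product probability measure on 𝒳 × ℝ, and f : 𝒳 → ℝ a bounded measurable function. For n ∈ ℕ and y ∈ ℝ define the fixed-resolution posterior mean gₙ(y) = (∫_𝒳 f(x)·κ(x, Iₙ(y)) dμ(x)) / (∫_𝒳 κ(x, Iₙ(y)) dμ(x)). Then for π-almost every (x, y) ∈ 𝒳 × ℝ: the denominators ∫_𝒳 κ(x', Iₙ(y)) dμ(x') are strictly positive for every n, and gₙ(y) converges as n → ∞ to the conditional expectation of f ∘ fst given the σ-algebra generated by the second projection, evaluated at (x, y); i.e., gₙ(y) → E_π[f(X) | Y](x, y) π-almost everywhere. -/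

import Mathlib

open MeasureTheory ProbabilityTheory Filter Topology

/-- The dyadic discretization `αₙ(y) = 2^(-n) * ⌈2^n * y⌉`. -/
noncomputable def dyadApprox (n : ℕ) (y : ℝ) : ℝ :=
  (2 : ℝ) ^ (-(n : ℤ)) * (⌈(2 : ℝ) ^ n * y⌉ : ℝ)

/-- The dyadic cell `Iₙ(y) = (αₙ(y) - 2^(-n), αₙ(y)]`. -/
noncomputable def dyadCell (n : ℕ) (y : ℝ) : Set ℝ :=
  Set.Ioc (dyadApprox n y - (2 : ℝ) ^ (-(n : ℤ))) (dyadApprox n y)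

namespace DyadAux

lemma two_zpow_pos (k : ℤ) : (0:ℝ) < (2:ℝ) ^ k := zpow_pos (by norm_num) k

lemma zpow_mul_pow (n : ℕ) : (2:ℝ) ^ (-(n:ℤ)) * (2:ℝ) ^ n = 1 := by
  rw [← zpow_natCast (2:ℝ) n, ← zpow_add₀ (by norm_num : (2:ℝ) ≠ 0)]
  simp

/-- The explicit dyadic cell with label `m`. -/
noncomputable def cellSet (n : ℕ) (m : ℤ) : Set ℝ :=
  Set.Ioc ((2:ℝ) ^ (-(n:ℤ)) * ((m:ℝ) - 1)) ((2:ℝ) ^ (-(n:ℤ)) * (m:ℝ))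

lemma measurableSet_cellSet {n : ℕ} {m : ℤ} : MeasurableSet (cellSet n m) :=
  measurableSet_Ioc

lemma mem_cellSet_iff {n : ℕ} {m : ℤ} {y : ℝ} :
    y ∈ cellSet n m ↔ ⌈(2:ℝ) ^ n * y⌉ = m := by
  have h2 : (0:ℝ) < (2:ℝ) ^ n := by positivity
  rw [Int.ceil_eq_iff]
  unfold cellSet
  simp only [Set.mem_Ioc]
  constructor
  · rintro ⟨h1, h2'⟩
    constructor
    · calc ((m:ℝ) - 1) = (2:ℝ)^n * ((2:ℝ)^(-(n:ℤ)) * ((m:ℝ)-1)) := by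
            rw [← mul_assoc, mul_comm ((2:ℝ)^n), zpow_mul_pow n, one_mul]
        _ < (2:ℝ)^n * y := by exact mul_lt_mul_of_pos_left h1 h2
    · calc (2:ℝ)^n * y ≤ (2:ℝ)^n * ((2:ℝ)^(-(n:ℤ)) * (m:ℝ)) := mul_le_mul_of_nonneg_left h2' h2.le
        _ = (m:ℝ) := by rw [← mul_assoc, mul_comm ((2:ℝ)^n), zpow_mul_pow n, one_mul]
  · rintro ⟨h1, h2'⟩
    constructor
    · have := mul_lt_mul_of_pos_left h1 (two_zpow_pos (-(n:ℤ)))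
      calc (2:ℝ)^(-(n:ℤ)) * ((m:ℝ) - 1) < (2:ℝ)^(-(n:ℤ)) * ((2:ℝ)^n * y) := this
        _ = y := by rw [← mul_assoc, zpow_mul_pow n, one_mul]
    · have := mul_le_mul_of_nonneg_left h2' (two_zpow_pos (-(n:ℤ))).le
      calc y = (2:ℝ)^(-(n:ℤ)) * ((2:ℝ)^n * y) := by rw [← mul_assoc, zpow_mul_pow n, one_mul]
        _ ≤ (2:ℝ)^(-(n:ℤ)) * (m:ℝ) := this

lemma dyadCell_eq_cellSet (n : ℕ) (y : ℝ) :
    dyadCell n y = cellSet n ⌈(2:ℝ) ^ n * y⌉ := by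
  unfold dyadCell cellSet dyadApprox
  congr 1
  ring

lemma mem_dyadCell_self (n : ℕ) (y : ℝ) : y ∈ dyadCell n y := by
  rw [dyadCell_eq_cellSet, mem_cellSet_iff]

lemma dyadCell_of_mem_cellSet {n : ℕ} {m : ℤ} {y : ℝ} (hy : y ∈ cellSet n m) :
    dyadCell n y = cellSet n m := by
  rw [dyadCell_eq_cellSet, mem_cellSet_iff.mp hy]

lemma pow_mul_zpow_cancel (n : ℕ) (c : ℝ) : (2:ℝ)^n * ((2:ℝ)^(-(n:ℤ)) * c) = c := by
  rw [← mul_assoc, mul_comm ((2:ℝ)^n), zpow_mul_pow n, one_mul]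

lemma dyadApprox_succ (n : ℕ) (y : ℝ) : dyadApprox n (dyadApprox (n+1) y) = dyadApprox n y := by
  unfold dyadApprox
  congr 2
  set m : ℤ := ⌈(2:ℝ)^(n+1) * y⌉ with hm
  set k : ℤ := ⌈(2:ℝ)^n * y⌉ with hk
  have h1 : (2:ℝ)^n * ((2:ℝ)^(-((n:ℤ)+1)) * (m:ℝ)) = (m:ℝ) / 2 := by
    rw [← mul_assoc, ← zpow_natCast (2:ℝ) n, ← zpow_add₀ (by norm_num : (2:ℝ) ≠ 0)]
    have : (n:ℤ) + -((n:ℤ)+1) = -1 := by ring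
    rw [this]
    norm_num
    ring
  push_cast
  rw [h1]
  have h2n : (0:ℝ) < (2:ℝ)^n := by positivity
  have hky : (2:ℝ)^n * y ≤ (k:ℝ) := Int.le_ceil _
  have hky' : (k:ℝ) - 1 < (2:ℝ)^n * y := by
    have := Int.ceil_lt_add_one ((2:ℝ)^n * y)
    linarith
  have hmy : (2:ℝ)^(n+1) * y ≤ (m:ℝ) := Int.le_ceil _
  have hmy' : (m:ℝ) - 1 < (2:ℝ)^(n+1) * y := by
    have := Int.ceil_lt_add_one ((2:ℝ)^(n+1) * y)
    linarith
  have hpow : (2:ℝ)^(n+1) = 2 * (2:ℝ)^n := by ring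
  rw [Int.ceil_eq_iff]
  constructor
  · have : (2:ℝ)^n * y ≤ (m:ℝ)/2 := by
      rw [hpow] at hmy; linarith
    linarith
  · have hmlt : (m:ℝ) - 1 < 2 * (k:ℝ) := by
      rw [hpow] at hmy'; nlinarith
    have : m ≤ 2 * k := by
      have : (m:ℝ) < 2*(k:ℝ) + 1 := by linarith
      exact_mod_cast Int.lt_add_one_iff.mp (by exact_mod_cast this)
    have : (m:ℝ) ≤ 2 * (k:ℝ) := by exact_mod_cast this
    linarith

lemma dyadApprox_tendsto (y : ℝ) :
    Tendsto (fun n : ℕ => dyadApprox n y) atTop (𝓝 y) := by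
  have h1 : ∀ n : ℕ, y ≤ dyadApprox n y := fun n => (mem_dyadCell_self n y).2
  have h2 : ∀ n : ℕ, dyadApprox n y ≤ y + (2:ℝ)^(-(n:ℤ)) := by
    intro n
    have := (mem_dyadCell_self n y).1
    linarith
  have hlim : Tendsto (fun n : ℕ => y + (2:ℝ)^(-(n:ℤ))) atTop (𝓝 (y + 0)) := by
    apply Tendsto.const_add
    have : Tendsto (fun n : ℕ => ((2:ℝ)⁻¹)^n) atTop (𝓝 0) :=
      tendsto_pow_atTop_nhds_zero_of_lt_one (by norm_num) (by norm_num)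
    convert this using 2 with n
    rw [zpow_neg, zpow_natCast, inv_pow]
  rw [add_zero] at hlim
  exact tendsto_of_tendsto_of_tendsto_of_le_of_le tendsto_const_nhds hlim h1 h2

/-- σ-algebra on ℝ generated by the level-`n` dyadic cells. -/
noncomputable def dyadSigma (n : ℕ) : MeasurableSpace ℝ := MeasurableSpace.comap (dyadApprox n) ⊤

lemma measurable_dyadApprox (n : ℕ) : Measurable (dyadApprox n) := by
  unfold dyadApprox
  exact (measurable_from_top.comp (measurable_const_mul _).ceil).const_mul _

lemma dyadSigma_mono : Monotone dyadSigma := by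
  apply monotone_nat_of_le_succ
  intro n
  have h : dyadApprox n = (dyadApprox n) ∘ (dyadApprox (n+1)) := by
    funext y; exact (dyadApprox_succ n y).symm
  calc dyadSigma n = MeasurableSpace.comap (dyadApprox n ∘ dyadApprox (n+1)) ⊤ := by
        conv_lhs => rw [dyadSigma, h]
    _ = ((⊤ : MeasurableSpace ℝ).comap (dyadApprox n)).comap (dyadApprox (n+1)) :=
        (MeasurableSpace.comap_comp).symm
    _ ≤ (⊤ : MeasurableSpace ℝ).comap (dyadApprox (n+1)) :=
        MeasurableSpace.comap_mono le_top

lemma cellSet_preimage (n : ℕ) (S : Set ℝ) :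
    dyadApprox n ⁻¹' S =
      ⋃ m : ℤ, ⋃ (_ : (2:ℝ)^(-(n:ℤ)) * (m:ℝ) ∈ S), cellSet n m := by
  ext y
  simp only [Set.mem_preimage, Set.mem_iUnion]
  constructor
  · intro hy
    exact ⟨⌈(2:ℝ)^n * y⌉, hy, mem_cellSet_iff.mpr rfl⟩
  · rintro ⟨m, hmS, hym⟩
    have : ⌈(2:ℝ)^n * y⌉ = m := mem_cellSet_iff.mp hym
    show dyadApprox n y ∈ S
    unfold dyadApprox
    rw [this]; exact hmS

lemma dyadSigma_le_borel (n : ℕ) : dyadSigma n ≤ (inferInstance : MeasurableSpace ℝ) := by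
  rintro s ⟨S, -, rfl⟩
  rw [cellSet_preimage]
  exact MeasurableSet.iUnion fun m => MeasurableSet.iUnion fun _ => measurableSet_Ioc

lemma iSup_dyadSigma : (⨆ n, dyadSigma n) = (inferInstance : MeasurableSpace ℝ) := by
  apply le_antisymm
  · exact iSup_le dyadSigma_le_borel
  · have hid : @Measurable ℝ ℝ (⨆ n, dyadSigma n) _ id := by
      refine @measurable_of_tendsto_metrizable ℝ ℝ (⨆ n, dyadSigma n) _ _ _ _
        (fun n => dyadApprox n) id (fun n => ?_) ?_
      · have h1 : @Measurable ℝ ℝ (dyadSigma n) _ (dyadApprox n) := by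
          rw [measurable_iff_comap_le]
          exact MeasurableSpace.comap_mono le_top
        exact h1.mono (le_iSup dyadSigma n) le_rfl
      · rw [tendsto_pi_nhds]
        intro y
        exact dyadApprox_tendsto y
    intro s hs
    exact hid hs

end DyadAux

open DyadAux

/-- The σ-algebra on `𝒳 × ℝ` generated by the second projection. -/
def sndBorel (𝒳 : Type*) : MeasurableSpace (𝒳 × ℝ) :=
  MeasurableSpace.comap Prod.snd (borel ℝ)

theorem posterior_mean_dyadCell_tendsto_condexp
    {𝒳 : Type*} [MeasurableSpace 𝒳] (μ : Measure 𝒳) [IsProbabilityMeasure μ]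
    (κ : Kernel 𝒳 ℝ) [IsMarkovKernel κ]
    (f : 𝒳 → ℝ) (hf : Measurable f) (hfbdd : ∃ C : ℝ, ∀ x, |f x| ≤ C) :
    ∀ᵐ p ∂(μ ⊗ₘ κ),
      (∀ n : ℕ, 0 < ∫ x', (κ x' (dyadCell n p.2)).toReal ∂μ) ∧
      Tendsto
        (fun n : ℕ => (∫ x', f x' * (κ x' (dyadCell n p.2)).toReal ∂μ) /
          ∫ x', (κ x' (dyadCell n p.2)).toReal ∂μ)
        atTop
        (𝓝 (((μ ⊗ₘ κ)[(fun q : 𝒳 × ℝ => f q.1) |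
          MeasurableSpace.comap (Prod.snd : 𝒳 × ℝ → ℝ) (borel ℝ)]) p)) := by
  obtain ⟨C₀, hC₀⟩ := hfbdd
  set C := max C₀ 0 with hCdef
  have hC : ∀ x, |f x| ≤ C := fun x => (hC₀ x).trans (le_max_left _ _)
  have hC0 : (0:ℝ) ≤ C := le_max_right _ _
  set π := μ ⊗ₘ κ with hπ
  set F : 𝒳 × ℝ → ℝ := fun q => f q.1 with hFdef
  have hFmeas : Measurable F := hf.comp measurable_fst
  have hFint : Integrable F π :=
    ⟨hFmeas.aestronglyMeasurable,
      HasFiniteIntegral.of_bounded (C := C)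
        (ae_of_all _ fun p => by simpa [Real.norm_eq_abs, hFdef] using hC p.1)⟩
  -- the σ-algebras
  have hsnd : MeasurableSpace.comap (Prod.snd : 𝒳 × ℝ → ℝ)
      (inferInstance : MeasurableSpace ℝ) ≤ (inferInstance : MeasurableSpace (𝒳 × ℝ)) :=
    (@measurable_snd 𝒳 ℝ _ _).comap_le
  have hborel : borel ℝ = (inferInstance : MeasurableSpace ℝ) := rfl
  have h𝔾le : sndBorel 𝒳 ≤ (inferInstance : MeasurableSpace (𝒳 × ℝ)) := hsnd
  set ℱ : Filtration ℕ (inferInstance : MeasurableSpace (𝒳 × ℝ)) :=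
    { seq := fun n => (dyadSigma n).comap Prod.snd
      mono' := fun i j hij => MeasurableSpace.comap_mono (dyadSigma_mono hij)
      le' := fun n =>
        le_trans (MeasurableSpace.comap_mono (dyadSigma_le_borel n)) hsnd } with hℱ
  have hℱn : ∀ n, ℱ n = (dyadSigma n).comap Prod.snd := fun n => rfl
  have hsup : (⨆ n, (ℱ n : MeasurableSpace (𝒳 × ℝ))) = sndBorel 𝒳 := by
    simp only [hℱn]
    rw [← MeasurableSpace.comap_iSup, iSup_dyadSigma]
    rfl
  -- basic integral identities
  have hπfin : ∀ s : Set (𝒳 × ℝ), π s ≠ ⊤ := fun s => measure_ne_top π s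
  have hπcell : ∀ (A : Set ℝ), MeasurableSet A →
      π (Prod.snd ⁻¹' A) = ∫⁻ x, κ x A ∂μ := by
    intro A hA
    rw [hπ, Measure.compProd_apply (measurable_snd hA)]
    rfl
  have hden : ∀ (A : Set ℝ), MeasurableSet A →
      ∫ x', (κ x' A).toReal ∂μ = (π (Prod.snd ⁻¹' A)).toReal := by
    intro A hA
    rw [hπcell A hA, integral_toReal ((κ.measurable_coe hA).aemeasurable)
      (ae_of_all _ fun x => measure_lt_top _ _)]
  have hnum : ∀ (A : Set ℝ), MeasurableSet A →
      ∫ x', f x' * (κ x' A).toReal ∂μ = ∫ p in Prod.snd ⁻¹' A, F p ∂π := by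
    intro A hA
    have hprod : (Prod.snd ⁻¹' A : Set (𝒳 × ℝ)) = Set.univ ×ˢ A := by
      ext p; simp
    rw [hprod, hπ, Measure.setIntegral_compProd MeasurableSet.univ hA
      (by rw [← hπ, ← hprod]; exact hFint.integrableOn)]
    rw [Measure.restrict_univ]
    congr 1
    funext x
    rw [hFdef]
    simp only
    rw [setIntegral_const, smul_eq_mul, mul_comm]
    rfl
  -- bound on the numerator
  have hkerbound : ∀ (A : Set ℝ), MeasurableSet A →
      |∫ x', f x' * (κ x' A).toReal ∂μ| ≤ C * ∫ x', (κ x' A).toReal ∂μ := by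
    intro A hA
    have htmeas : Measurable fun x => (κ x A).toReal :=
      (κ.measurable_coe hA).ennreal_toReal
    have ht0 : ∀ x, (0:ℝ) ≤ (κ x A).toReal := fun x => ENNReal.toReal_nonneg
    have ht1 : ∀ x, (κ x A).toReal ≤ 1 := by
      intro x
      rw [← ENNReal.toReal_one]
      exact ENNReal.toReal_mono (by norm_num) prob_le_one
    have htint : Integrable (fun x => (κ x A).toReal) μ :=
      ⟨htmeas.aestronglyMeasurable,
        HasFiniteIntegral.of_bounded (C := 1)
          (ae_of_all _ fun x => by rw [Real.norm_eq_abs, abs_of_nonneg (ht0 x)]; exact ht1 x)⟩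
    have hftabs : Integrable (fun x => |f x| * (κ x A).toReal) μ :=
      ⟨(hf.abs.mul htmeas).aestronglyMeasurable,
        HasFiniteIntegral.of_bounded (C := C)
          (ae_of_all _ fun x => by
            rw [Real.norm_eq_abs, abs_mul, abs_abs, abs_of_nonneg (ht0 x)]
            calc |f x| * (κ x A).toReal ≤ C * 1 :=
                  mul_le_mul (hC x) (ht1 x) (ht0 x) hC0
              _ = C := mul_one C)⟩
    have habs : |∫ x', f x' * (κ x' A).toReal ∂μ| ≤ ∫ x', |f x'| * (κ x' A).toReal ∂μ := by
      have := norm_integral_le_integral_norm (fun x' => f x' * (κ x' A).toReal) (μ := μ)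
      simpa [Real.norm_eq_abs, abs_mul, abs_of_nonneg (ht0 _)] using this
    calc |∫ x', f x' * (κ x' A).toReal ∂μ| ≤ ∫ x', |f x'| * (κ x' A).toReal ∂μ := habs
      _ ≤ ∫ x', C * (κ x' A).toReal ∂μ :=
          integral_mono hftabs (htint.const_mul C)
            (fun x => mul_le_mul_of_nonneg_right (hC x) (ht0 x))
      _ = C * ∫ x', (κ x' A).toReal ∂μ := integral_const_mul C _
  -- the approximating ratio functions
  set G : ℕ → 𝒳 × ℝ → ℝ := fun n p =>
    (∫ x', f x' * (κ x' (dyadCell n p.2)).toReal ∂μ) /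
      ∫ x', (κ x' (dyadCell n p.2)).toReal ∂μ with hGdef
  have hdennonneg : ∀ n (y : ℝ), (0:ℝ) ≤ ∫ x', (κ x' (dyadCell n y)).toReal ∂μ :=
    fun n y => integral_nonneg fun x => ENNReal.toReal_nonneg
  have hGbound : ∀ n p, |G n p| ≤ C := by
    intro n p
    rw [hGdef]
    simp only
    have hb := hkerbound (dyadCell n p.2) measurableSet_Ioc
    rcases eq_or_lt_of_le (hdennonneg n p.2) with h0 | hpos
    · rw [← h0, div_zero, abs_zero]
      exact hC0
    · rw [abs_div, abs_of_pos hpos, div_le_iff₀ hpos]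
      exact hb
  have hGmeasF : ∀ n, Measurable[ℱ n] (G n) := by
    intro n
    have hFeq : ℱ n = MeasurableSpace.comap (fun p : 𝒳 × ℝ => dyadApprox n p.2) ⊤ := by
      rw [hℱn, dyadSigma, MeasurableSpace.comap_comp]
      rfl
    intro s _
    rw [hFeq]
    refine ⟨(fun z => (∫ x', f x' * (κ x' (Set.Ioc (z - (2:ℝ)^(-(n:ℤ))) z)).toReal ∂μ) /
      ∫ x', (κ x' (Set.Ioc (z - (2:ℝ)^(-(n:ℤ))) z)).toReal ∂μ) ⁻¹' s, trivial, ?_⟩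
    rfl
  have hGmeas : ∀ n, Measurable (G n) := fun n => (hGmeasF n).mono (ℱ.le n) le_rfl
  have hGint : ∀ n, Integrable (G n) π := by
    intro n
    exact ⟨(hGmeas n).aestronglyMeasurable,
      HasFiniteIntegral.of_bounded (C := C)
        (ae_of_all _ fun p => by rw [Real.norm_eq_abs]; exact hGbound n p)⟩
  -- set-integral characterization: G n is the conditional expectation on ℱ n
  have hGset : ∀ n (s : Set (𝒳 × ℝ)), MeasurableSet[ℱ n] s → π s < ⊤ →
      ∫ p in s, G n p ∂π = ∫ p in s, F p ∂π := by
    intro n s hs _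
    rw [hℱn] at hs
    obtain ⟨t, ⟨S, -, rfl⟩, rfl⟩ := hs
    rw [cellSet_preimage]
    set A : ℤ → Set (𝒳 × ℝ) := fun m =>
      Prod.snd ⁻¹' (⋃ (_ : (2:ℝ)^(-(n:ℤ)) * (m:ℝ) ∈ S), cellSet n m) with hA
    have hAmeas : ∀ m, MeasurableSet (A m) := fun m =>
      measurable_snd (MeasurableSet.iUnion fun _ => measurableSet_cellSet)
    have hmemA : ∀ m p, p ∈ A m → ⌈(2:ℝ)^n * p.2⌉ = m := by
      intro m p hp
      simp only [hA, Set.mem_preimage, Set.mem_iUnion] at hp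
      exact mem_cellSet_iff.mp hp.2
    have hdisj : Pairwise (Function.onFun Disjoint A) := by
      intro m1 m2 hne
      rw [Function.onFun, Set.disjoint_left]
      intro p hp1 hp2
      exact hne ((hmemA m1 p hp1).symm.trans (hmemA m2 p hp2))
    have hAunion : (Prod.snd ⁻¹'
        (⋃ m : ℤ, ⋃ (_ : (2:ℝ)^(-(n:ℤ)) * (m:ℝ) ∈ S), cellSet n m)) = ⋃ m, A m := by
      rw [hA]; rw [Set.preimage_iUnion]
    rw [hAunion]
    rw [integral_iUnion hAmeas hdisj (hGint n).integrableOn,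
      integral_iUnion hAmeas hdisj hFint.integrableOn]
    congr 1
    funext m
    by_cases hm : (2:ℝ)^(-(n:ℤ)) * (m:ℝ) ∈ S
    · have hAm : A m = Prod.snd ⁻¹' cellSet n m := by
        have hu : (⋃ (_ : (2:ℝ)^(-(n:ℤ)) * (m:ℝ) ∈ S), cellSet n m) = cellSet n m := by
          ext y
          simp only [Set.mem_iUnion]
          exact ⟨fun ⟨_, h⟩ => h, fun h => ⟨hm, h⟩⟩
        simp only [hA]
        rw [hu]
      have hconst : ∀ p ∈ A m, G n p =
          (∫ x', f x' * (κ x' (cellSet n m)).toReal ∂μ) /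
            ∫ x', (κ x' (cellSet n m)).toReal ∂μ := by
        intro p hp
        have : p.2 ∈ cellSet n m := by rw [hAm] at hp; exact hp
        rw [hGdef]
        simp only
        rw [dyadCell_of_mem_cellSet this]
      rw [setIntegral_congr_fun (hAmeas m) hconst, setIntegral_const]
      have hdenm : (π (A m)).toReal = ∫ x', (κ x' (cellSet n m)).toReal ∂μ := by
        rw [hAm, ← hden _ measurableSet_cellSet]
      have hnumm : ∫ p in A m, F p ∂π = ∫ x', f x' * (κ x' (cellSet n m)).toReal ∂μ := by
        rw [hAm, ← hnum _ measurableSet_cellSet]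
      change (π (A m)).toReal • _ = _
      rw [hnumm, hdenm, smul_eq_mul]
      set d := ∫ x', (κ x' (cellSet n m)).toReal ∂μ with hd
      set nu := ∫ x', f x' * (κ x' (cellSet n m)).toReal ∂μ with hnu
      rcases eq_or_ne d 0 with h0 | h0
      · have hb : |nu| ≤ C * d := hkerbound _ measurableSet_cellSet
        rw [h0] at hb
        have : nu = 0 := abs_eq_zero.mp (le_antisymm (by simpa using hb) (abs_nonneg _))
        rw [h0, this]
        ring
      · field_simp
    · have hAm : A m = ∅ := by
        have hu : (⋃ (_ : (2:ℝ)^(-(n:ℤ)) * (m:ℝ) ∈ S), cellSet n m) = (∅ : Set ℝ) := by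
          ext y
          simp only [Set.mem_iUnion, Set.mem_empty_iff_false, iff_false, not_exists]
          exact fun h _ => hm h
        simp only [hA]
        rw [hu, Set.preimage_empty]
      rw [hAm]
      simp
  have hcond : ∀ n, G n =ᵐ[π] π[F | ℱ n] := by
    intro n
    exact ae_eq_condExp_of_forall_setIntegral_eq (ℱ.le n) hFint
      (fun s _ _ => (hGint n).integrableOn) (hGset n)
      (StronglyMeasurable.aestronglyMeasurable (hGmeasF n).stronglyMeasurable)
  -- Lévy upward theorem
  have hlevy : ∀ᵐ p ∂π, Tendsto (fun n => (π[(π[F | sndBorel 𝒳]) | ℱ n]) p) atTop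
      (𝓝 ((π[F | sndBorel 𝒳]) p)) := by
    apply Integrable.tendsto_ae_condExp integrable_condExp
    rw [hsup]
    exact stronglyMeasurable_condExp
  have htower : ∀ n, π[(π[F | sndBorel 𝒳]) | ℱ n] =ᵐ[π] π[F | ℱ n] := by
    intro n
    exact condExp_condExp_of_le (by rw [← hsup]; exact le_iSup (fun k => ℱ k) n) h𝔾le
  have hae1 : ∀ᵐ p ∂π, ∀ n, G n p = (π[(π[F | sndBorel 𝒳]) | ℱ n]) p := by
    rw [ae_all_iff]
    intro n
    filter_upwards [hcond n, htower n] with p h1 h2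
    rw [h1, h2]
  -- positivity of denominators
  have hpos : ∀ᵐ p ∂π, ∀ n : ℕ, (0:ℝ) < ∫ x', (κ x' (dyadCell n p.2)).toReal ∂μ := by
    rw [ae_all_iff]
    intro n
    set N : Set (𝒳 × ℝ) :=
      ⋃ m ∈ {m : ℤ | π (Prod.snd ⁻¹' cellSet n m) = 0}, Prod.snd ⁻¹' cellSet n m with hN
    have hNnull : π N = 0 := by
      rw [hN]
      exact (measure_biUnion_null_iff (Set.to_countable _)).mpr fun m hm => hm
    have hae : ∀ᵐ p ∂π, p ∉ N := (measure_eq_zero_iff_ae_notMem).mp hNnull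
    filter_upwards [hae] with p hp
    have hcellpos : π (Prod.snd ⁻¹' (dyadCell n p.2)) ≠ 0 := by
      intro h0
      apply hp
      rw [dyadCell_eq_cellSet] at h0
      refine Set.mem_biUnion h0 ?_
      exact mem_cellSet_iff.mpr rfl
    rw [hden (dyadCell n p.2) measurableSet_Ioc]
    exact ENNReal.toReal_pos hcellpos (hπfin _)
  -- conclusion
  filter_upwards [hlevy, hae1, hpos] with p h1 h2 h3
  refine ⟨h3, ?_⟩
  have heq : (fun n : ℕ => (∫ x', f x' * (κ x' (dyadCell n p.2)).toReal ∂μ) /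
      ∫ x', (κ x' (dyadCell n p.2)).toReal ∂μ) = fun n => (π[(π[F | sndBorel 𝒳]) | ℱ n]) p := by
    funext n
    exact h2 n
  rw [show (MeasurableSpace.comap (Prod.snd : 𝒳 × ℝ → ℝ) (borel ℝ)) = sndBorel 𝒳 from rfl,
    heq]
  exact h1
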